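/- Let p_1, …, p_N ∈ ℝ^d and M > 0. Then the minimum of Σ_{i=1}^N ⟨p_i, u_i⟩ over all (u_1, …, u_N) ∈ (ℝ^d)^N satisfying Σ_{i=1}^N ‖u_i‖ ≤ M equals −M·max_{1≤i≤N} ‖p_i‖. Moreover, if j is an index achieving the maximum and ‖p_j‖ > 0, then the componentwise sparse choice u_j = −M·p_j/‖p_j‖ and u_i = 0 for i ≠ j attains this minimum; and if ‖p_j‖ > ‖p_i‖ for all i ≠ j, this sparse choice is the unique minimizer. -/

import Mathlib

open RealInnerProductSpace

lemma sparse_lb {d N : ℕ} (M : ℝ)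
    (p : Fin N → EuclideanSpace ℝ (Fin d))
    (j : Fin N) (hj : ∀ i, ‖p i‖ ≤ ‖p j‖)
    (u : Fin N → EuclideanSpace ℝ (Fin d)) (hu : (∑ i, ‖u i‖) ≤ M) :
    -(M * ‖p j‖) ≤ ∑ i, ⟪p i, u i⟫ := by
  have h1 : ∀ i : Fin N, -(‖p j‖ * ‖u i‖) ≤ ⟪p i, u i⟫ := by
    intro i
    have h2 : |⟪p i, u i⟫| ≤ ‖p i‖ * ‖u i‖ := abs_real_inner_le_norm _ _
    have h3 : ‖p i‖ * ‖u i‖ ≤ ‖p j‖ * ‖u i‖ :=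
      mul_le_mul_of_nonneg_right (hj i) (norm_nonneg _)
    linarith [neg_abs_le (⟪p i, u i⟫)]
  calc -(M * ‖p j‖) ≤ -(‖p j‖ * ∑ i, ‖u i‖) := by
        rw [neg_le_neg_iff, mul_comm]
        exact mul_le_mul_of_nonneg_right hu (norm_nonneg _)
    _ = ∑ i, -(‖p j‖ * ‖u i‖) := by rw [Finset.mul_sum, ← Finset.sum_neg_distrib]
    _ ≤ ∑ i, ⟪p i, u i⟫ := Finset.sum_le_sum fun i _ => h1 i

lemma sparse_val {d N : ℕ} (M : ℝ)
    (p : Fin N → EuclideanSpace ℝ (Fin d)) (j : Fin N) (hpj : 0 < ‖p j‖) :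
    (∑ i, ⟪p i, (fun k => if k = j then -(M / ‖p j‖) • p j else 0) i⟫) = -(M * ‖p j‖) := by
  rw [Finset.sum_eq_single j (fun i _ hij => by simp [hij]) (by simp)]
  have hb : (fun k => if k = j then -(M / ‖p j‖) • p j else 0) j = -(M / ‖p j‖) • p j :=
    if_pos rfl
  rw [hb, real_inner_smul_right, real_inner_self_eq_norm_mul_norm]
  field_simp

theorem sparse_minimizer
    {d N : ℕ} (M : ℝ) (hM : 0 < M)
    (p : Fin N → EuclideanSpace ℝ (Fin d))
    (j : Fin N) (hj : ∀ i, ‖p i‖ ≤ ‖p j‖) :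
    IsLeast {s : ℝ | ∃ u : Fin N → EuclideanSpace ℝ (Fin d),
        (∑ i, ‖u i‖) ≤ M ∧ s = ∑ i, ⟪p i, u i⟫} (-(M * ‖p j‖)) ∧
    (0 < ‖p j‖ →
      ((∑ i, ⟪p i, (fun k => if k = j then -(M / ‖p j‖) • p j else 0) i⟫) = -(M * ‖p j‖)) ∧
      ((∀ i, i ≠ j → ‖p i‖ < ‖p j‖) →
        ∀ u : Fin N → EuclideanSpace ℝ (Fin d), (∑ i, ‖u i‖) ≤ M →
          (∑ i, ⟪p i, u i⟫) = -(M * ‖p j‖) →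
          u = fun k => if k = j then -(M / ‖p j‖) • p j else 0)) := by
  constructor
  · constructor
    · rcases eq_or_lt_of_le (norm_nonneg (p j)) with h0 | h0
      · refine ⟨0, by simp [le_of_lt hM], ?_⟩
        simp [← h0]
      · refine ⟨fun k => if k = j then -(M / ‖p j‖) • p j else 0, ?_, (sparse_val M p j h0).symm⟩
        rw [Finset.sum_eq_single j]
        · simp [norm_smul, abs_div, abs_of_pos hM, ne_of_gt h0, div_mul_cancel₀]
        · intro i _ hij; simp [hij]
        · simp
    · rintro s ⟨u, hu, rfl⟩
      exact sparse_lb M p j hj u hu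
  · intro hpj
    refine ⟨sparse_val M p j hpj, ?_⟩
    intro hstrict u hu heq
    -- first: u i = 0 for i ≠ j
    have key : ∀ i : Fin N, -(‖p j‖ * ‖u i‖) ≤ ⟪p i, u i⟫ := by
      intro i
      have h2 : |⟪p i, u i⟫| ≤ ‖p i‖ * ‖u i‖ := abs_real_inner_le_norm _ _
      have h3 : ‖p i‖ * ‖u i‖ ≤ ‖p j‖ * ‖u i‖ :=
        mul_le_mul_of_nonneg_right (hj i) (norm_nonneg _)
      linarith [neg_abs_le (⟪p i, u i⟫)]
    have hsum : ∑ i, -(‖p j‖ * ‖u i‖) ≤ ∑ i, ⟪p i, u i⟫ := Finset.sum_le_sum fun i _ => key i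
    have hge : -(M * ‖p j‖) ≤ ∑ i, -(‖p j‖ * ‖u i‖) := by
      rw [Finset.sum_neg_distrib, ← Finset.mul_sum, neg_le_neg_iff, mul_comm]
      exact mul_le_mul_of_nonneg_right hu (norm_nonneg _)
    have heq2 : ∑ i, -(‖p j‖ * ‖u i‖) = -(M * ‖p j‖) := le_antisymm (heq ▸ hsum) hge
    -- ∑ ‖u i‖ = M
    have hsumnorm : ∑ i, ‖u i‖ = M := by
      have := heq2
      rw [Finset.sum_neg_distrib, ← Finset.mul_sum, neg_inj, mul_comm] at this
      exact mul_right_cancel₀ (ne_of_gt hpj) this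
    -- each inner equals its lower bound
    have heach : ∀ i : Fin N, ⟪p i, u i⟫ = -(‖p j‖ * ‖u i‖) := by
      intro i
      by_contra hne
      have hlt : -(‖p j‖ * ‖u i‖) < ⟪p i, u i⟫ := lt_of_le_of_ne (key i) (Ne.symm hne)
      have : ∑ k, -(‖p j‖ * ‖u k‖) < ∑ k, ⟪p k, u k⟫ :=
        Finset.sum_lt_sum (fun k _ => key k) ⟨i, Finset.mem_univ i, hlt⟩
      rw [heq2, heq] at this
      exact lt_irrefl _ this
    -- u i = 0 for i ≠ j
    have hzero : ∀ i : Fin N, i ≠ j → u i = 0 := by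
      intro i hij
      by_contra hne
      have hni : 0 < ‖u i‖ := norm_pos_iff.2 hne
      have h2 : -(‖p i‖ * ‖u i‖) ≤ ⟪p i, u i⟫ := by
        have := abs_real_inner_le_norm (p i) (u i)
        linarith [neg_abs_le (⟪p i, u i⟫)]
      have := heach i
      have hlt : ‖p i‖ * ‖u i‖ < ‖p j‖ * ‖u i‖ :=
        mul_lt_mul_of_pos_right (hstrict i hij) hni
      linarith
    have hnj : ‖u j‖ = M := by
      rw [Finset.sum_eq_single j (fun i _ hij => by simp [hzero i hij]) (by simp)] at hsumnorm
      exact hsumnorm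
    -- Cauchy-Schwarz equality
    have hcs : ⟪p j, -u j⟫ = ‖p j‖ * ‖-u j‖ := by
      rw [inner_neg_right, heach j, norm_neg]; ring
    have := inner_eq_norm_mul_iff_real.1 hcs
    rw [norm_neg, hnj] at this
    -- this : M • p j = ‖p j‖ • (-u j)
    have huj : u j = -(M / ‖p j‖) • p j := by
      have h2 : ‖p j‖ • u j = ‖p j‖ • (-(M / ‖p j‖) • p j) := by
        rw [neg_smul, smul_neg, smul_smul, show ‖p j‖ * (M / ‖p j‖) = M by field_simp, this]
        simp
      exact smul_right_injective _ (ne_of_gt hpj) h2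
    funext k
    by_cases hk : k = j
    · subst hk; simp [huj]
    · simp [hk, hzero k hk]
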